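/- The bilinear forms graph Bil_2(2×2) (on 2×2 matrices over F_2) is isomorphic to the complement of the (4×4)-grid. -/

import Mathlib

open SimpleGraph

/-- The bilinear forms graph on `e × d` matrices over a field `F`:
two matrices are adjacent iff their difference has rank 1. -/
def bilGraph (F : Type) [Field F] (e d : ℕ) : SimpleGraph (Matrix (Fin e) (Fin d) F) where
  Adj A B := A ≠ B ∧ (A - B).rank = 1
  symm := by
    constructor
    intro A B h
    refine ⟨h.1.symm, ?_⟩
    have hn : B - A = -(A - B) := by abel
    have hml : (-(A - B)).mulVecLin = -(A - B).mulVecLin := by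
      ext v
      simp [Matrix.neg_mulVec]
    have hr : (-(A - B)).rank = (A - B).rank := by
      unfold Matrix.rank
      rw [hml, LinearMap.range_neg]
    rw [hn, hr]
    exact h.2
  loopless := by constructor; intro A h; exact h.1 rfl

/-- The `(n × m)`-grid: the Cartesian product of the complete graphs `K_n` and `K_m`. -/
def gridGraph (n m : ℕ) : SimpleGraph (Fin n × Fin m) where
  Adj a b := a ≠ b ∧ (a.1 = b.1 ∨ a.2 = b.2)
  symm := by constructor; intro a b h; exact ⟨h.1.symm, h.2.imp Eq.symm Eq.symm⟩
  loopless := by constructor; intro a h; exact h.1 rfl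

/-- A `2 × 2` matrix over a field has rank one iff it is nonzero with zero determinant. -/
lemma rank_one_iff_2x2 (A : Matrix (Fin 2) (Fin 2) (ZMod 2)) :
    A.rank = 1 ↔ A ≠ 0 ∧ A.det = 0 := by
  constructor
  · intro h
    constructor
    · rintro rfl
      simp [Matrix.rank_zero] at h
    · by_contra hdet
      have hu : IsUnit A := (Matrix.isUnit_iff_isUnit_det A).mpr (isUnit_iff_ne_zero.mpr hdet)
      have := Matrix.rank_of_isUnit A hu
      rw [h] at this
      simp [Fintype.card_fin] at this
  · rintro ⟨hne, hdet⟩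
    obtain ⟨v, hv, hMv⟩ := (Matrix.exists_mulVec_eq_zero_iff).mpr hdet
    have hrn := LinearMap.finrank_range_add_finrank_ker A.mulVecLin
    have hcard : Module.finrank (ZMod 2) (Fin 2 → ZMod 2) = 2 := by
      simp [Module.finrank_pi]
    rw [hcard] at hrn
    have hker : Module.finrank (ZMod 2) (LinearMap.ker A.mulVecLin) ≠ 0 := by
      rw [Ne, Submodule.finrank_eq_zero]
      intro hbot
      have : v ∈ LinearMap.ker A.mulVecLin := by
        simpa [Matrix.mulVecLin_apply] using hMv
      rw [hbot] at this
      exact hv this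
    have hle : A.rank ≤ 1 := by
      unfold Matrix.rank
      omega
    have hne0 : A.rank ≠ 0 := by
      intro h0
      apply hne
      have hbot : LinearMap.range A.mulVecLin = ⊥ := by
        rw [← Submodule.finrank_eq_zero]
        exact h0
      have hzero : A.mulVecLin = 0 := LinearMap.range_eq_bot.mp hbot
      ext i j
      have h2 : A.mulVec (Pi.single j 1) = 0 := by
        rw [← Matrix.mulVecLin_apply, hzero]; rfl
      have := congrFun h2 i
      simpa [Matrix.mulVec_single] using this
    omega

/-- The forward map of the isomorphism. -/
def toPair (M : Matrix (Fin 2) (Fin 2) (ZMod 2)) : Fin 4 × Fin 4 :=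
  (⟨2 * (M 0 0 + M 0 1 + M 1 0).val + (M 0 0 + M 1 1).val, by
      have h1 := (M 0 0 + M 0 1 + M 1 0).val_lt
      have h2 := (M 0 0 + M 1 1).val_lt
      omega⟩,
   ⟨2 * (M 0 0 + M 0 1 + M 1 1).val + (M 0 0 + M 1 0 + M 1 1).val, by
      have h1 := (M 0 0 + M 0 1 + M 1 1).val_lt
      have h2 := (M 0 0 + M 1 0 + M 1 1).val_lt
      omega⟩)

/-- The inverse map of the isomorphism. -/
def ofPair (p : Fin 4 × Fin 4) : Matrix (Fin 2) (Fin 2) (ZMod 2) :=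
  let x : ZMod 2 := ((p.1 : ℕ) / 2 : ℕ)
  let y : ZMod 2 := ((p.1 : ℕ) % 2 : ℕ)
  let z : ZMod 2 := ((p.2 : ℕ) / 2 : ℕ)
  let t : ZMod 2 := ((p.2 : ℕ) % 2 : ℕ)
  !![x + z + t, y + z; y + t, x + y + z + t]

instance (n m : ℕ) : DecidableRel (gridGraph n m).Adj :=
  fun a b => decidable_of_iff (a ≠ b ∧ (a.1 = b.1 ∨ a.2 = b.2)) Iff.rfl

lemma toPair_leftInv : ∀ M, ofPair (toPair M) = M := by decide

lemma toPair_rightInv : ∀ p, toPair (ofPair p) = p := by decide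

lemma toPair_key : ∀ M N : Matrix (Fin 2) (Fin 2) (ZMod 2),
    (gridGraph 4 4)ᶜ.Adj (toPair M) (toPair N) ↔ (M ≠ N ∧ (M - N).det = 0) := by decide

/-- `Bil_2(2 × 2)` is isomorphic to the complement of the `(4 × 4)`-grid. -/
theorem bil2_2x2_is_complement_of_grid :
    Nonempty (bilGraph (ZMod 2) 2 2 ≃g (gridGraph 4 4)ᶜ) := by
  refine ⟨⟨⟨toPair, ofPair, toPair_leftInv, toPair_rightInv⟩, ?_⟩⟩
  intro M N
  show (gridGraph 4 4)ᶜ.Adj (toPair M) (toPair N) ↔ _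
  rw [toPair_key M N]
  show (M ≠ N ∧ (M - N).det = 0) ↔ (M ≠ N ∧ (M - N).rank = 1)
  rw [rank_one_iff_2x2]
  constructor
  · rintro ⟨hne, hdet⟩
    exact ⟨hne, sub_ne_zero.mpr hne, hdet⟩
  · rintro ⟨hne, _, hdet⟩
    exact ⟨hne, hdet⟩
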